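/- (The minimiser satisfies the Euler–Lagrange equations, weak form.) Fix t > 0 and x ∈ ℝ. Let V : [0,t] × ℝ → ℝ be continuous and bounded with bounded, continuous derivative V_x in the second variable, and let φ : ℝ → ℝ be continuously differentiable and bounded with bounded derivative. Suppose ỹ : [0,t] → ℝ is admissible (ỹ(s) = ỹ(0) + ∫_0^s g̃, g̃ ∈ L²([0,t]), ỹ(t) = x) and minimises A(y) = ½∫_0^t y'(s)² ds + ∫_0^t V(s, y(s)) ds + φ(y(0)) over all admissible y. Then for every z : [0,t] → ℝ with z(s) = z(0) + ∫_0^s h, h ∈ L²([0,t]) and z(t) = 0, one has ∫_0^t h(s)·g̃(s) ds + ∫_0^t z(s)·V_x(s, ỹ(s)) ds + z(0)·φ'(ỹ(0)) = 0. In particular, if ỹ is twice continuously differentiable then ỹ''(s) = V_x(s, ỹ(s)) for all s ∈ [0,t] and ỹ'(0) = φ'(ỹ(0)). -/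

import Mathlib

open MeasureTheory intervalIntegral

open MeasureTheory intervalIntegral Set

lemma EL.mul_integrable {μ : Measure ℝ} {f g : ℝ → ℝ} (hf : MemLp f 2 μ) (hg : MemLp g 2 μ) :
    Integrable (fun x => f x * g x) μ := by
  refine (hf.integrable_sq.add hg.integrable_sq).mono'
    (hf.aestronglyMeasurable.mul hg.aestronglyMeasurable)
    (Filter.Eventually.of_forall fun x => ?_)
  simp only [Pi.add_apply, Real.norm_eq_abs, abs_mul]
  nlinarith [sq_nonneg (|f x| - |g x|), abs_nonneg (f x), abs_nonneg (g x),
    sq_abs (f x), sq_abs (g x)]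

lemma EL.integral_primitive_zero {t : ℝ} (ht : 0 < t) {f ψ ψd : ℝ → ℝ}
    (hf : IntegrableOn f (Set.Ioc 0 t) volume)
    (hD : ∀ s ∈ Set.Icc (0:ℝ) t, ∫ r in (0:ℝ)..s, f r = 0)
    (hψ : ∀ x, HasDerivAt ψ (ψd x) x) (hψd : Continuous ψd) :
    ∫ r in (0:ℝ)..t, ψ r * f r = 0 := by
  set μ := volume.restrict (Set.Ioc (0:ℝ) t) with hμ
  have hfm : AEStronglyMeasurable f μ := hf.aestronglyMeasurable
  obtain ⟨C, hC⟩ := isCompact_Icc.exists_bound_of_continuousOn hψd.continuousOn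
  have hC0 : 0 ≤ C := le_trans (norm_nonneg _) (hC 0 ⟨le_rfl, ht.le⟩)
  -- the kernel
  set F : ℝ → ℝ → ℝ := fun r s => (if r < s then ψd s else 0) * f r with hF
  have hFm : AEStronglyMeasurable (Function.uncurry F) (μ.prod μ) := by
    have h1 : Measurable fun p : ℝ × ℝ => if p.1 < p.2 then ψd p.2 else 0 :=
      Measurable.ite (measurableSet_lt measurable_fst measurable_snd)
        (hψd.measurable.comp measurable_snd) measurable_const
    have h2 : AEMeasurable (fun p : ℝ × ℝ => f p.1) (μ.prod μ) := hfm.aemeasurable.comp_fst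
    exact (h1.aemeasurable.mul h2).aestronglyMeasurable
  have hFi : Integrable (Function.uncurry F) (μ.prod μ) := by
    rw [integrable_prod_iff hFm]
    constructor
    · refine Filter.Eventually.of_forall fun r => ?_
      refine (integrable_const (C * |f r|)).mono' ?_ ?_
      · exact ((Measurable.ite (measurableSet_lt measurable_const measurable_id)
          hψd.measurable measurable_const).mul_const (f r)).aestronglyMeasurable
      · filter_upwards [ae_restrict_mem measurableSet_Ioc] with s hs
        simp only [Function.uncurry_apply_pair, hF, Real.norm_eq_abs, abs_mul]
        have hle : |(if r < s then ψd s else 0)| ≤ C := by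
          split_ifs with h
          · simpa [Real.norm_eq_abs] using hC s ⟨hs.1.le, hs.2⟩
          · simpa using hC0
        exact mul_le_mul_of_nonneg_right hle (abs_nonneg _)
    · refine ((hf.norm.const_mul C).mul_const ((μ Set.univ).toReal)).mono' ?_ ?_
      · exact hFm.norm.integral_prod_right'
      · refine Filter.Eventually.of_forall fun r => ?_
        have hnn : 0 ≤ ∫ s, ‖F r s‖ ∂μ := integral_nonneg fun s => norm_nonneg _
        simp only [Function.uncurry_apply_pair]
        rw [Real.norm_eq_abs, abs_of_nonneg hnn]
        have hb : ∀ᵐ s ∂μ, ‖F r s‖ ≤ C * ‖f r‖ := by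
          filter_upwards [ae_restrict_mem measurableSet_Ioc] with s hs
          simp only [hF, Real.norm_eq_abs, abs_mul]
          have hle : |(if r < s then ψd s else 0)| ≤ C := by
            split_ifs with h
            · simpa [Real.norm_eq_abs] using hC s ⟨hs.1.le, hs.2⟩
            · simpa using hC0
          exact mul_le_mul_of_nonneg_right hle (Real.norm_eq_abs (f r) ▸ abs_nonneg _)
        calc ∫ s, ‖F r s‖ ∂μ ≤ ∫ _s, C * ‖f r‖ ∂μ := by
              refine integral_mono_of_nonneg (Filter.Eventually.of_forall fun s => norm_nonneg _)
                (integrable_const _) hb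
          _ = C * ‖f r‖ * (μ Set.univ).toReal := by
              rw [MeasureTheory.integral_const, smul_eq_mul, measureReal_def]; ring
          _ = C * |f r| * (μ Set.univ).toReal := by rw [Real.norm_eq_abs]
  have swap := integral_integral_swap hFi
  -- the s-section vanishes
  have hrhs : ∫ s, (∫ r, F r s ∂μ) ∂μ = 0 := by
    have hsec : ∀ s ∈ Set.Ioc (0:ℝ) t, (∫ r, F r s ∂μ) = 0 := by
      intro s hs
      have e1 : ∀ r, F r s = ψd s * (Set.Iio s).indicator f r := by
        intro r
        by_cases h : r < s
        · simp [hF, Set.indicator_apply, Set.mem_Iio, h]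
        · simp [hF, Set.indicator_apply, Set.mem_Iio, h]
      calc ∫ r, F r s ∂μ = ∫ r, ψd s * (Set.Iio s).indicator f r ∂μ := by
            exact integral_congr_ae (Filter.Eventually.of_forall e1)
        _ = ψd s * ∫ r, (Set.Iio s).indicator f r ∂μ := integral_const_mul _ _
        _ = ψd s * ∫ r in Set.Iio s, f r ∂μ := by rw [MeasureTheory.integral_indicator measurableSet_Iio]
        _ = ψd s * ∫ r in Set.Ioo 0 s, f r := by
            have hset : Set.Iio s ∩ Set.Ioc 0 t = Set.Ioo 0 s := by
              ext r
              simp only [Set.mem_inter_iff, Set.mem_Iio, Set.mem_Ioc, Set.mem_Ioo]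
              exact ⟨fun h => ⟨h.2.1, h.1⟩, fun h => ⟨h.2, h.1, h.2.le.trans hs.2⟩⟩
            rw [hμ, Measure.restrict_restrict measurableSet_Iio, hset]
        _ = ψd s * ∫ r in (0:ℝ)..s, f r := by
            rw [intervalIntegral.integral_of_le hs.1.le, integral_Ioc_eq_integral_Ioo]
        _ = 0 := by rw [hD s ⟨hs.1.le, hs.2⟩, mul_zero]
    calc ∫ s, (∫ r, F r s ∂μ) ∂μ = ∫ s in Set.Ioc (0:ℝ) t, (0:ℝ) := by
          rw [hμ]
          exact setIntegral_congr_fun measurableSet_Ioc fun s hs => hsec s hs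
      _ = 0 := by simp
  -- the r-section
  have hlhs : ∫ r, (∫ s, F r s ∂μ) ∂μ = ∫ r, (∫ s in r..t, ψd s) * f r ∂μ := by
    rw [hμ]
    refine setIntegral_congr_fun measurableSet_Ioc fun r hr => ?_
    have e2 : ∀ s, F r s = (Set.Ioi r).indicator ψd s * f r := by
      intro s
      by_cases h : r < s
      · simp [hF, Set.indicator_apply, Set.mem_Ioi, h]
      · simp [hF, Set.indicator_apply, Set.mem_Ioi, h]
    calc ∫ s, F r s ∂μ = ∫ s, (Set.Ioi r).indicator ψd s * f r ∂μ :=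
          integral_congr_ae (Filter.Eventually.of_forall e2)
      _ = (∫ s, (Set.Ioi r).indicator ψd s ∂μ) * f r := integral_mul_const _ _
      _ = (∫ s in Set.Ioi r, ψd s ∂μ) * f r := by rw [MeasureTheory.integral_indicator measurableSet_Ioi]
      _ = (∫ s in Set.Ioc r t, ψd s) * f r := by
          have hset : Set.Ioi r ∩ Set.Ioc 0 t = Set.Ioc r t := by
            ext s
            simp only [Set.mem_inter_iff, Set.mem_Ioi, Set.mem_Ioc]
            exact ⟨fun h => ⟨h.1, h.2.2⟩, fun h => ⟨h.1, hr.1.trans h.1, h.2⟩⟩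
          rw [hμ, Measure.restrict_restrict measurableSet_Ioi, hset]
      _ = (∫ s in r..t, ψd s) * f r := by rw [intervalIntegral.integral_of_le hr.2]
  -- primitive of ψd
  have hψrepr : ∀ r, ψ r = ψ t - ∫ s in r..t, ψd s := by
    intro r
    have := intervalIntegral.integral_eq_sub_of_hasDerivAt (f := ψ) (f' := ψd)
      (fun x _ => hψ x) (hψd.intervalIntegrable (μ := volume) r t)
    linarith
  -- continuity of W
  have hWrepr : ∀ r, (∫ s in r..t, ψd s) = (∫ s in (0:ℝ)..t, ψd s) - ∫ s in (0:ℝ)..r, ψd s := by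
    intro r
    have := intervalIntegral.integral_add_adjacent_intervals
      (hψd.intervalIntegrable 0 r) (hψd.intervalIntegrable (μ := volume) r t)
    linarith
  have hWcont : Continuous fun r => ∫ s in r..t, ψd s := by
    have h1 : Continuous fun r => ∫ s in (0:ℝ)..r, ψd s :=
      Differentiable.continuous fun r => ((hψd.integral_hasStrictDerivAt 0 r).hasDerivAt).differentiableAt
    have : (fun r => ∫ s in r..t, ψd s) = fun r => (∫ s in (0:ℝ)..t, ψd s) - ∫ s in (0:ℝ)..r, ψd s :=
      funext hWrepr
    rw [this]
    exact continuous_const.sub h1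
  obtain ⟨Cw, hCw⟩ := isCompact_Icc.exists_bound_of_continuousOn hWcont.continuousOn
  have hWf : Integrable (fun r => (∫ s in r..t, ψd s) * f r) μ := by
    refine (hf.norm.const_mul Cw).mono'
      (hWcont.aestronglyMeasurable.mul hfm) ?_
    filter_upwards [ae_restrict_mem measurableSet_Ioc] with r hr
    rw [Real.norm_eq_abs, abs_mul]
    exact mul_le_mul_of_nonneg_right
      (by simpa [Real.norm_eq_abs] using hCw r ⟨hr.1.le, hr.2⟩) (abs_nonneg _)
  have hft : ∫ r, f r ∂μ = 0 := by
    rw [hμ, ← intervalIntegral.integral_of_le ht.le]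
    exact hD t ⟨ht.le, le_rfl⟩
  calc ∫ r in (0:ℝ)..t, ψ r * f r = ∫ r, ψ r * f r ∂μ := intervalIntegral.integral_of_le ht.le
    _ = ∫ r, (ψ t * f r - (∫ s in r..t, ψd s) * f r) ∂μ :=
        integral_congr_ae (Filter.Eventually.of_forall fun r => by
          show ψ r * f r = ψ t * f r - (∫ s in r..t, ψd s) * f r
          rw [hψrepr r]; ring)
    _ = ψ t * ∫ r, f r ∂μ - ∫ r, (∫ s in r..t, ψd s) * f r ∂μ := by
        rw [integral_sub (hf.const_mul (ψ t)) hWf, MeasureTheory.integral_const_mul]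
    _ = 0 := by
        rw [hft, mul_zero, zero_sub, ← hlhs, swap, hrhs, neg_zero]


/-- **The minimiser satisfies the Euler–Lagrange equations (weak form).**
If the admissible `W^{1,2}` trajectory `ỹ` (with a.e. derivative `g̃`, endpoint `ỹ(t) = x`)
minimises the action `A(y) = ½∫₀ᵗ y'² + ∫₀ᵗ V(s,y(s)) ds + φ(y(0))` over all admissible
trajectories, then for every `W^{1,2}` variation `z` with `z(t) = 0`,
`∫₀ᵗ h g̃ + ∫₀ᵗ z(s) V_x(s,ỹ(s)) ds + z(0) φ'(ỹ(0)) = 0`; in particular, if `ỹ` is twice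
continuously differentiable then `ỹ'' = V_x(s,ỹ)` on `[0,t]` and `ỹ'(0) = φ'(ỹ(0))`. -/
theorem minimiser_satisfies_euler_lagrange (t x : ℝ) (ht : 0 < t)
    (V : ℝ → ℝ → ℝ) (φ : ℝ → ℝ)
    (hVcont : ContinuousOn (fun p : ℝ × ℝ => V p.1 p.2) (Set.Icc 0 t ×ˢ Set.univ))
    (hVbdd : ∃ C, ∀ s ∈ Set.Icc (0:ℝ) t, ∀ y, |V s y| ≤ C)
    (Vx : ℝ → ℝ → ℝ)
    (hVx : ∀ s ∈ Set.Icc (0:ℝ) t, ∀ y, HasDerivAt (V s) (Vx s y) y)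
    (hVxcont : ContinuousOn (fun p : ℝ × ℝ => Vx p.1 p.2) (Set.Icc 0 t ×ˢ Set.univ))
    (hVxbdd : ∃ C, ∀ s ∈ Set.Icc (0:ℝ) t, ∀ y, |Vx s y| ≤ C)
    (hφ : ContDiff ℝ 1 φ) (hφbdd : ∃ C, ∀ y, |φ y| ≤ C)
    (hφ'bdd : ∃ C, ∀ y, |deriv φ y| ≤ C)
    (Adm : (ℝ → ℝ) → (ℝ → ℝ) → Prop)
    (hAdm : ∀ y g, Adm y g ↔
      MemLp g 2 (volume.restrict (Set.Icc (0:ℝ) t)) ∧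
      (∀ s ∈ Set.Icc (0:ℝ) t, y s = y 0 + ∫ r in (0:ℝ)..s, g r) ∧
      y t = x)
    (A : (ℝ → ℝ) → (ℝ → ℝ) → ℝ)
    (hA : ∀ y g, A y g = (1 / 2) * (∫ s in (0:ℝ)..t, (g s) ^ 2)
        + (∫ s in (0:ℝ)..t, V s (y s)) + φ (y 0))
    (ytilde gtilde : ℝ → ℝ) (hadm : Adm ytilde gtilde)
    (hmin : ∀ y g, Adm y g → A ytilde gtilde ≤ A y g) :
    (∀ z h : ℝ → ℝ,
      MemLp h 2 (volume.restrict (Set.Icc (0:ℝ) t)) →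
      (∀ s ∈ Set.Icc (0:ℝ) t, z s = z 0 + ∫ r in (0:ℝ)..s, h r) →
      z t = 0 →
      (∫ s in (0:ℝ)..t, h s * gtilde s)
        + (∫ s in (0:ℝ)..t, z s * Vx s (ytilde s))
        + z 0 * deriv φ (ytilde 0) = 0) ∧
    (ContDiff ℝ 2 ytilde →
      (∀ s ∈ Set.Icc (0:ℝ) t, deriv (deriv ytilde) s = Vx s (ytilde s)) ∧
      deriv ytilde 0 = deriv φ (ytilde 0)) := by
  classical
  obtain ⟨hg2, hy, hyt⟩ := (hAdm _ _).1 hadm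
  have htmem : t ∈ Set.Icc (0:ℝ) t := ⟨ht.le, le_rfl⟩
  have toII : ∀ (f : ℝ → ℝ), IntegrableOn f (Set.Icc 0 t) volume →
      ∀ s ∈ Set.Icc (0:ℝ) t, IntervalIntegrable f volume 0 s := by
    intro f hf s hs
    exact (intervalIntegrable_iff_integrableOn_Ioc_of_le hs.1).2
      (hf.mono_set fun r hr => ⟨hr.1.le, hr.2.trans hs.2⟩)
  have hgI : IntegrableOn gtilde (Set.Icc 0 t) volume := hg2.integrable one_le_two
  have primCont : ∀ (f : ℝ → ℝ), IntegrableOn f (Set.Icc 0 t) volume →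
      ∀ (w : ℝ → ℝ), (∀ s ∈ Set.Icc (0:ℝ) t, w s = w 0 + ∫ r in (0:ℝ)..s, f r) →
      ContinuousOn w (Set.Icc 0 t) := by
    intro f hf w hw
    have h1 : ContinuousOn (fun s => w 0 + ∫ r in Set.Ioc 0 s, f r) (Set.Icc 0 t) :=
      continuousOn_const.add (intervalIntegral.continuousOn_primitive hf)
    refine h1.congr fun s hs => ?_
    rw [hw s hs, intervalIntegral.integral_of_le hs.1]
  have hycont : ContinuousOn ytilde (Set.Icc 0 t) := primCont _ hgI _ hy
  have compCont : ∀ (W : ℝ → ℝ → ℝ),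
      ContinuousOn (fun p : ℝ × ℝ => W p.1 p.2) (Set.Icc 0 t ×ˢ Set.univ) →
      ∀ (w : ℝ → ℝ), ContinuousOn w (Set.Icc 0 t) →
      ContinuousOn (fun s => W s (w s)) (Set.Icc 0 t) := by
    intro W hW w hw
    have h1 : ContinuousOn (fun s => (s, w s)) (Set.Icc 0 t) := continuousOn_id.prodMk hw
    exact hW.comp h1 fun s hs => ⟨hs, Set.mem_univ _⟩
  obtain ⟨CV, hCV⟩ := hVbdd
  obtain ⟨CVx, hCVx⟩ := hVxbdd
  have huIoc : Set.uIoc (0:ℝ) t = Set.Ioc 0 t := Set.uIoc_of_le ht.le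
  -- ================== PART 1 ==================
  have key : ∀ z h : ℝ → ℝ,
      MemLp h 2 (volume.restrict (Set.Icc (0:ℝ) t)) →
      (∀ s ∈ Set.Icc (0:ℝ) t, z s = z 0 + ∫ r in (0:ℝ)..s, h r) →
      z t = 0 →
      (∫ s in (0:ℝ)..t, h s * gtilde s)
        + (∫ s in (0:ℝ)..t, z s * Vx s (ytilde s))
        + z 0 * deriv φ (ytilde 0) = 0 := by
    intro z h hh2 hz hzt
    have hhI : IntegrableOn h (Set.Icc 0 t) volume := hh2.integrable one_le_two
    have hzcont : ContinuousOn z (Set.Icc 0 t) := primCont _ hhI _ hz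
    obtain ⟨Mz, hMz⟩ := isCompact_Icc.exists_bound_of_continuousOn hzcont
    have hMz0 : 0 ≤ Mz := le_trans (norm_nonneg _) (hMz 0 ⟨le_rfl, ht.le⟩)
    -- admissibility of the perturbed trajectories
    have hadm' : ∀ ε : ℝ, Adm (fun s => ytilde s + ε * z s) (fun s => gtilde s + ε * h s) := by
      intro ε
      rw [hAdm]
      refine ⟨hg2.add (hh2.const_mul ε), fun s hs => ?_, by rw [hyt, hzt]; ring⟩
      rw [intervalIntegral.integral_add (toII _ hgI s hs) ((toII _ hhI s hs).const_mul ε),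
        intervalIntegral.integral_const_mul, hy s hs, hz s hs]
      ring
    -- interval integrabilities
    have hg2sqI : IntervalIntegrable (fun s => gtilde s ^ 2) volume 0 t :=
      toII _ hg2.integrable_sq t htmem
    have hhsqI : IntervalIntegrable (fun s => h s ^ 2) volume 0 t :=
      toII _ hh2.integrable_sq t htmem
    have hmulI : IntervalIntegrable (fun s => h s * gtilde s) volume 0 t :=
      toII _ (EL.mul_integrable hh2 hg2) t htmem
    -- Term 1 : the kinetic part
    have hT1 : HasDerivAt (fun ε : ℝ => (1/2) * ∫ s in (0:ℝ)..t, (gtilde s + ε * h s) ^ 2)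
        (∫ s in (0:ℝ)..t, h s * gtilde s) 0 := by
      have expand : ∀ ε : ℝ, (∫ s in (0:ℝ)..t, (gtilde s + ε * h s) ^ 2)
          = (∫ s in (0:ℝ)..t, gtilde s ^ 2)
            + ε * (2 * ∫ s in (0:ℝ)..t, h s * gtilde s)
            + ε ^ 2 * ∫ s in (0:ℝ)..t, h s ^ 2 := by
        intro ε
        rw [intervalIntegral.integral_congr
          (g := fun s => gtilde s ^ 2 + ε * (2 * (h s * gtilde s)) + ε ^ 2 * h s ^ 2)
          (fun s _ => by ring)]
        rw [intervalIntegral.integral_add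
            (hg2sqI.add ((hmulI.const_mul 2).const_mul ε)) (hhsqI.const_mul (ε ^ 2)),
          intervalIntegral.integral_add hg2sqI ((hmulI.const_mul 2).const_mul ε),
          intervalIntegral.integral_const_mul, intervalIntegral.integral_const_mul,
          intervalIntegral.integral_const_mul]
      have hpoly : HasDerivAt (fun ε : ℝ => (1/2) * ((∫ s in (0:ℝ)..t, gtilde s ^ 2)
          + ε * (2 * ∫ s in (0:ℝ)..t, h s * gtilde s)
          + ε ^ 2 * ∫ s in (0:ℝ)..t, h s ^ 2))
          (∫ s in (0:ℝ)..t, h s * gtilde s) 0 := by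
        have hA1 : HasDerivAt (fun ε : ℝ => ε * (2 * ∫ s in (0:ℝ)..t, h s * gtilde s))
            (2 * ∫ s in (0:ℝ)..t, h s * gtilde s) 0 := hasDerivAt_mul_const _
        have hA2 : HasDerivAt (fun ε : ℝ => ε ^ 2 * ∫ s in (0:ℝ)..t, h s ^ 2)
            ((2:ℕ) * (0:ℝ) ^ 1 * ∫ s in (0:ℝ)..t, h s ^ 2) 0 :=
          (hasDerivAt_pow 2 0).mul_const _
        have := ((hA1.const_add (∫ s in (0:ℝ)..t, gtilde s ^ 2)).add hA2).const_mul (1/2)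
        refine this.congr_deriv ?_
        push_cast
        ring
      have hfun : (fun ε : ℝ => (1/2) * ∫ s in (0:ℝ)..t, (gtilde s + ε * h s) ^ 2)
          = fun ε : ℝ => (1/2) * ((∫ s in (0:ℝ)..t, gtilde s ^ 2)
            + ε * (2 * ∫ s in (0:ℝ)..t, h s * gtilde s)
            + ε ^ 2 * ∫ s in (0:ℝ)..t, h s ^ 2) := funext fun ε => by rw [expand ε]
      rw [hfun]
      exact hpoly
    -- Term 2 : the potential part, by differentiation under the integral sign
    have hintV : ∀ ε : ℝ, IntervalIntegrable (fun s => V s (ytilde s + ε * z s)) volume 0 t := by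
      intro ε
      have hc : ContinuousOn (fun s => V s (ytilde s + ε * z s)) (Set.Icc 0 t) :=
        compCont V hVcont _ (hycont.add (continuousOn_const.mul hzcont))
      refine toII _ ?_ t htmem
      refine Integrable.mono' (integrable_const CV)
        (hc.aestronglyMeasurable measurableSet_Icc) ?_
      filter_upwards [ae_restrict_mem measurableSet_Icc] with s hs
      simpa [Real.norm_eq_abs] using hCV s hs _
    have hmeasV : ∀ ε : ℝ, AEStronglyMeasurable (fun s => V s (ytilde s + ε * z s))
        (volume.restrict (Set.uIoc (0:ℝ) t)) := by
      intro ε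
      have hc : ContinuousOn (fun s => V s (ytilde s + ε * z s)) (Set.Icc 0 t) :=
        compCont V hVcont _ (hycont.add (continuousOn_const.mul hzcont))
      refine (hc.aestronglyMeasurable (μ := volume) measurableSet_Icc).mono_measure ?_
      rw [huIoc]
      exact Measure.restrict_mono Set.Ioc_subset_Icc_self le_rfl
    have hmeasVx : AEStronglyMeasurable (fun s => z s * Vx s (ytilde s + (0:ℝ) * z s))
        (volume.restrict (Set.uIoc (0:ℝ) t)) := by
      have hc : ContinuousOn (fun s => z s * Vx s (ytilde s + (0:ℝ) * z s)) (Set.Icc 0 t) :=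
        hzcont.mul (compCont Vx hVxcont _ (hycont.add (continuousOn_const.mul hzcont)))
      refine (hc.aestronglyMeasurable (μ := volume) measurableSet_Icc).mono_measure ?_
      rw [huIoc]
      exact Measure.restrict_mono Set.Ioc_subset_Icc_self le_rfl
    have hT2full := intervalIntegral.hasDerivAt_integral_of_dominated_loc_of_deriv_le
      (F := fun ε s => V s (ytilde s + ε * z s))
      (F' := fun ε s => z s * Vx s (ytilde s + ε * z s))
      (x₀ := (0:ℝ)) (a := 0) (b := t) (μ := volume) (bound := fun _ => Mz * CVx)
      (s := Metric.ball 0 1) (Metric.ball_mem_nhds 0 one_pos)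
      (Filter.Eventually.of_forall hmeasV)
      (hintV 0) hmeasVx
      (Filter.Eventually.of_forall fun s hs x _ => ?_)
      (intervalIntegrable_const)
      (Filter.Eventually.of_forall fun s hs x _ => ?_)
    rotate_left
    · -- bound
      have hs' : s ∈ Set.Icc (0:ℝ) t := by
        rw [huIoc] at hs; exact ⟨hs.1.le, hs.2⟩
      have h1 : ‖z s‖ ≤ Mz := hMz s hs'
      have h2 : |Vx s (ytilde s + x * z s)| ≤ CVx := hCVx s hs' _
      rw [Real.norm_eq_abs, abs_mul]
      exact mul_le_mul (by rwa [Real.norm_eq_abs] at h1) h2 (abs_nonneg _) hMz0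
    · -- differentiability in the parameter
      have hs' : s ∈ Set.Icc (0:ℝ) t := by
        rw [huIoc] at hs; exact ⟨hs.1.le, hs.2⟩
      have hlin : HasDerivAt (fun ε : ℝ => ytilde s + ε * z s) (z s) x :=
        (hasDerivAt_mul_const (z s)).const_add (ytilde s)
      have := (hVx s hs' (ytilde s + x * z s)).comp x hlin
      simpa [Function.comp_def, mul_comm] using this
    have hT2 : HasDerivAt (fun ε : ℝ => ∫ s in (0:ℝ)..t, V s (ytilde s + ε * z s))
        (∫ s in (0:ℝ)..t, z s * Vx s (ytilde s)) 0 := by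
      have := hT2full.2
      have e : (fun s => z s * Vx s (ytilde s + (0:ℝ) * z s)) = fun s => z s * Vx s (ytilde s) := by
        funext s; norm_num
      rwa [e] at this
    -- Term 3 : the boundary part
    have hT3 : HasDerivAt (fun ε : ℝ => φ (ytilde 0 + ε * z 0)) (z 0 * deriv φ (ytilde 0)) 0 := by
      have hlin : HasDerivAt (fun ε : ℝ => ytilde 0 + ε * z 0) (z 0) 0 :=
        (hasDerivAt_mul_const (z 0)).const_add (ytilde 0)
      have hφd : HasDerivAt φ (deriv φ (ytilde 0 + (0:ℝ) * z 0)) (ytilde 0 + (0:ℝ) * z 0) :=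
        ((hφ.differentiable one_ne_zero) _).hasDerivAt
      have := hφd.comp 0 hlin
      simp only [Function.comp_def] at this
      refine this.congr_deriv ?_
      norm_num [mul_comm]
    -- assemble
    have hsum := (hT1.add hT2).add hT3
    have hloc : IsLocalMin (fun ε : ℝ =>
        (1/2) * (∫ s in (0:ℝ)..t, (gtilde s + ε * h s) ^ 2)
        + (∫ s in (0:ℝ)..t, V s (ytilde s + ε * z s)) + φ (ytilde 0 + ε * z 0)) 0 := by
      refine Filter.Eventually.of_forall fun ε => ?_
      have h1 : A ytilde gtilde ≤ A (fun s => ytilde s + ε * z s) (fun s => gtilde s + ε * h s) :=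
        hmin _ _ (hadm' ε)
      have e1 : A (fun s => ytilde s + ε * z s) (fun s => gtilde s + ε * h s)
          = (1/2) * (∫ s in (0:ℝ)..t, (gtilde s + ε * h s) ^ 2)
            + (∫ s in (0:ℝ)..t, V s (ytilde s + ε * z s)) + φ (ytilde 0 + ε * z 0) := hA _ _
      have e0 : A ytilde gtilde
          = (1/2) * (∫ s in (0:ℝ)..t, (gtilde s + (0:ℝ) * h s) ^ 2)
            + (∫ s in (0:ℝ)..t, V s (ytilde s + (0:ℝ) * z s)) + φ (ytilde 0 + (0:ℝ) * z 0) := by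
        rw [hA]
        norm_num
      show (1/2) * (∫ s in (0:ℝ)..t, (gtilde s + (0:ℝ) * h s) ^ 2)
            + (∫ s in (0:ℝ)..t, V s (ytilde s + (0:ℝ) * z s)) + φ (ytilde 0 + (0:ℝ) * z 0)
          ≤ (1/2) * (∫ s in (0:ℝ)..t, (gtilde s + ε * h s) ^ 2)
            + (∫ s in (0:ℝ)..t, V s (ytilde s + ε * z s)) + φ (ytilde 0 + ε * z 0)
      rw [← e0, ← e1]
      exact h1
    exact hloc.hasDerivAt_eq_zero hsum
  refine ⟨key, ?_⟩
  intro hC2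
  -- ================== PART 2 ==================
  have hyd : Differentiable ℝ ytilde := hC2.differentiable (by norm_num)
  have h1d : ContDiff ℝ 1 (deriv ytilde) := by
    have h21 : ContDiff ℝ ((1:ℕ) + 1) ytilde := by exact_mod_cast hC2
    exact (contDiff_succ_iff_deriv.mp h21).2.2
  have hy'cont : Continuous (deriv ytilde) := hC2.continuous_deriv (by norm_num)
  have hy'd : Differentiable ℝ (deriv ytilde) := h1d.differentiable one_ne_zero
  have hy''cont : Continuous (deriv (deriv ytilde)) := h1d.continuous_deriv le_rfl
  -- clamped coefficient K
  set σ : ℝ → ℝ := fun s => max 0 (min s t) with hσ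
  have hσcont : Continuous σ := continuous_const.max (continuous_id.min continuous_const)
  have hσmem : ∀ s, σ s ∈ Set.Icc (0:ℝ) t :=
    fun s => ⟨le_max_left _ _, max_le ht.le (min_le_right _ _)⟩
  have hσeq : ∀ s ∈ Set.Icc (0:ℝ) t, σ s = s := by
    intro s hs
    rw [hσ]
    simp only
    rw [min_eq_left hs.2, max_eq_right hs.1]
  set K : ℝ → ℝ := fun s => Vx (σ s) (ytilde (σ s)) with hK
  have hKcont : Continuous K := by
    have hc : Continuous fun s => (σ s, ytilde (σ s)) :=
      hσcont.prodMk (hyd.continuous.comp hσcont)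
    exact hVxcont.comp_continuous hc fun s => ⟨hσmem s, Set.mem_univ _⟩
  have hKeq : ∀ s ∈ Set.Icc (0:ℝ) t, K s = Vx s (ytilde s) := by
    intro s hs
    rw [hK]
    simp only
    rw [hσeq s hs]
  set c := deriv φ (ytilde 0) with hc
  set P : ℝ → ℝ := fun s => ∫ r in (0:ℝ)..s, K r with hP
  have hPd : ∀ s, HasDerivAt P (K s) s :=
    fun s => (hKcont.integral_hasStrictDerivAt 0 s).hasDerivAt
  have hPcont : Continuous P := Differentiable.continuous fun s => (hPd s).differentiableAt
  have hP0 : P 0 = 0 := intervalIntegral.integral_same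
  set R : ℝ → ℝ := fun s => ∫ r in (0:ℝ)..s, (P r + c) with hR
  have hRd : ∀ s, HasDerivAt R (P s + c) s :=
    fun s => ((hPcont.add continuous_const).integral_hasStrictDerivAt 0 s).hasDerivAt
  have hR0 : R 0 = 0 := intervalIntegral.integral_same
  set z : ℝ → ℝ := fun s => ytilde s - R s - (ytilde t - R t) with hzdef
  set h₁ : ℝ → ℝ := fun s => deriv ytilde s - (P s + c) with hh₁
  have hzd : ∀ s, HasDerivAt z (h₁ s) s :=
    fun s => (((hyd s).hasDerivAt).sub (hRd s)).sub_const _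
  have hh₁cont : Continuous h₁ := hy'cont.sub (hPcont.add continuous_const)
  have hzt : z t = 0 := by rw [hzdef]; simp
  have hzform : ∀ s ∈ Set.Icc (0:ℝ) t, z s = z 0 + ∫ r in (0:ℝ)..s, h₁ r := by
    intro s hs
    have hFTC := intervalIntegral.integral_eq_sub_of_hasDerivAt (f := z) (f' := h₁)
      (fun r _ => hzd r) (hh₁cont.intervalIntegrable (μ := volume) 0 s)
    linarith
  have contMem : ∀ (f : ℝ → ℝ), Continuous f →
      MemLp f 2 (volume.restrict (Set.Icc (0:ℝ) t)) := by
    intro f hf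
    obtain ⟨M, hM⟩ := isCompact_Icc.exists_bound_of_continuousOn hf.continuousOn
    exact MemLp.of_bound hf.aestronglyMeasurable M
      ((ae_restrict_mem measurableSet_Icc).mono fun s hs => hM s hs)
  have E1 := key z h₁ (contMem _ hh₁cont) hzform hzt
  set h₂ : ℝ → ℝ := fun s => gtilde s - (P s + c) with hh₂
  have hmem2 : MemLp h₂ 2 (volume.restrict (Set.Icc (0:ℝ) t)) := by
    rw [hh₂]
    exact hg2.sub (contMem (fun s => P s + c) (hPcont.add continuous_const))
  have hzform2 : ∀ s ∈ Set.Icc (0:ℝ) t, z s = z 0 + ∫ r in (0:ℝ)..s, h₂ r := by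
    intro s hs
    have hPI : IntervalIntegrable (fun r => P r + c) volume 0 s :=
      (hPcont.add continuous_const).intervalIntegrable 0 s
    have hRs : R s = ∫ r in (0:ℝ)..s, (P r + c) := by rw [hR]
    have e2 : ∫ r in (0:ℝ)..s, gtilde r = ytilde s - ytilde 0 := by
      have := hy s hs; linarith
    rw [hh₂]
    simp only
    rw [intervalIntegral.integral_sub (toII _ hgI s hs) hPI, e2, ← hRs, hzdef]
    simp only
    rw [hR0]
    ring
  have E2 := key z h₂ hmem2 hzform2 hzt
  -- rewrite both identities
  have hzVx : ∫ s in (0:ℝ)..t, z s * Vx s (ytilde s) = ∫ s in (0:ℝ)..t, z s * K s := by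
    refine intervalIntegral.integral_congr fun s hs => ?_
    rw [hKeq s (by rwa [Set.uIcc_of_le ht.le] at hs)]
  have hparts : ∫ s in (0:ℝ)..t, z s * K s = - ∫ s in (0:ℝ)..t, h₁ s * P s := by
    have hIBP := intervalIntegral.integral_mul_deriv_eq_deriv_mul
      (u := z) (u' := h₁) (v := P) (v' := K)
      (fun r _ => hzd r) (fun r _ => hPd r)
      (hh₁cont.intervalIntegrable 0 t) (hKcont.intervalIntegrable 0 t)
    rw [hzt, hP0] at hIBP
    rw [hIBP]
    ring
  have hz0 : z 0 = - ∫ s in (0:ℝ)..t, h₁ s := by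
    have := hzform t htmem
    rw [hzt] at this
    linarith
  rw [hzVx, hparts, hz0] at E1 E2
  -- E1 : ∫ h₁ g - ∫ h₁ P + (-∫ h₁) * c = 0, same for E2
  have hE12 : ∫ s in (0:ℝ)..t, h₁ s * gtilde s = ∫ s in (0:ℝ)..t, h₂ s * gtilde s := by
    linarith
  have hIh₁P : IntervalIntegrable (fun s => h₁ s * P s) volume 0 t :=
    (hh₁cont.mul hPcont).intervalIntegrable 0 t
  have hIh₁ : IntervalIntegrable h₁ volume 0 t := hh₁cont.intervalIntegrable 0 t
  have hIh₁g : IntervalIntegrable (fun s => h₁ s * gtilde s) volume 0 t :=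
    toII _ (EL.mul_integrable (contMem _ hh₁cont) hg2) t htmem
  have hF2 : ∫ s in (0:ℝ)..t, h₁ s * h₂ s = 0 := by
    rw [intervalIntegral.integral_congr
      (g := fun s => h₁ s * gtilde s - (h₁ s * P s + h₁ s * c))
      (fun s _ => by rw [hh₂]; simp only; ring)]
    rw [intervalIntegral.integral_sub hIh₁g (hIh₁P.add (hIh₁.mul_const c)),
      intervalIntegral.integral_add hIh₁P (hIh₁.mul_const c),
      intervalIntegral.integral_mul_const]
    linarith
  -- the correction term vanishes by the Fubini lemma
  have hgmy' : IntegrableOn (fun s => gtilde s - deriv ytilde s) (Set.Ioc 0 t) volume := by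
    have h1 : IntegrableOn gtilde (Set.Ioc 0 t) volume := hgI.mono_set Set.Ioc_subset_Icc_self
    have h2 : IntegrableOn (deriv ytilde) (Set.Ioc 0 t) volume :=
      hy'cont.integrableOn_Ioc
    exact h1.sub h2
  have hDzero : ∀ s ∈ Set.Icc (0:ℝ) t, ∫ r in (0:ℝ)..s, (gtilde r - deriv ytilde r) = 0 := by
    intro s hs
    rw [intervalIntegral.integral_sub (toII _ hgI s hs)
      (hy'cont.intervalIntegrable 0 s)]
    have hFTC := intervalIntegral.integral_eq_sub_of_hasDerivAt
      (f := ytilde) (f' := deriv ytilde)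
      (fun r _ => (hyd r).hasDerivAt) (hy'cont.intervalIntegrable (μ := volume) 0 s)
    have := hy s hs
    linarith
  have hψd : ∀ x₀ : ℝ, HasDerivAt h₁ (deriv (deriv ytilde) x₀ - K x₀) x₀ :=
    fun x₀ => ((hy'd x₀).hasDerivAt).sub ((hPd x₀).add_const c)
  have hF3 := EL.integral_primitive_zero ht hgmy' hDzero hψd (hy''cont.sub hKcont)
  -- ∫ h₁² = 0
  have hsq : ∫ s in (0:ℝ)..t, h₁ s ^ 2 = 0 := by
    have hIa : IntervalIntegrable (fun s => h₁ s * h₂ s) volume 0 t :=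
      toII _ (EL.mul_integrable (contMem _ hh₁cont) hmem2) t htmem
    have hIb : IntervalIntegrable (fun s => h₁ s * (gtilde s - deriv ytilde s)) volume 0 t :=
      toII _ (EL.mul_integrable (contMem _ hh₁cont)
        (hg2.sub (contMem _ hy'cont))) t htmem
    rw [intervalIntegral.integral_congr
      (g := fun s => h₁ s * h₂ s - h₁ s * (gtilde s - deriv ytilde s))
      (fun s _ => by rw [hh₁, hh₂]; simp only; ring)]
    rw [intervalIntegral.integral_sub hIa hIb, hF2, hF3, sub_zero]
  -- h₁ vanishes on [0,t]
  have hvanish : ∀ s ∈ Set.Icc (0:ℝ) t, h₁ s = 0 := by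
    have hNzero : ∀ s ∈ Set.Icc (0:ℝ) t, ∫ r in (0:ℝ)..s, h₁ r ^ 2 = 0 := by
      intro s hs
      have hIa : IntervalIntegrable (fun r => h₁ r ^ 2) volume 0 s :=
        (hh₁cont.pow 2).intervalIntegrable 0 s
      have hIb : IntervalIntegrable (fun r => h₁ r ^ 2) volume s t :=
        (hh₁cont.pow 2).intervalIntegrable s t
      have hadd := intervalIntegral.integral_add_adjacent_intervals hIa hIb
      have h1 : 0 ≤ ∫ r in (0:ℝ)..s, h₁ r ^ 2 :=
        intervalIntegral.integral_nonneg hs.1 fun u _ => sq_nonneg _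
      have h2 : 0 ≤ ∫ r in s..t, h₁ r ^ 2 :=
        intervalIntegral.integral_nonneg hs.2 fun u _ => sq_nonneg _
      rw [hsq] at hadd
      linarith
    have hIoo : ∀ s ∈ Set.Ioo (0:ℝ) t, h₁ s = 0 := by
      intro s hs
      have hder : HasDerivAt (fun u => ∫ r in (0:ℝ)..u, h₁ r ^ 2) (h₁ s ^ 2) s :=
        ((hh₁cont.pow 2).integral_hasStrictDerivAt 0 s).hasDerivAt
      have hev : (fun u => ∫ r in (0:ℝ)..u, h₁ r ^ 2) =ᶠ[nhds s] fun _ => 0 := by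
        filter_upwards [Ioo_mem_nhds hs.1 hs.2] with u hu
        exact hNzero u ⟨hu.1.le, hu.2.le⟩
      have hd0 : deriv (fun u => ∫ r in (0:ℝ)..u, h₁ r ^ 2) s = 0 := by
        rw [hev.deriv_eq]
        exact deriv_const _ _
      have h12 : h₁ s ^ 2 = 0 := by rw [← hder.deriv]; exact hd0
      exact pow_eq_zero_iff two_ne_zero |>.mp h12
    intro s hs
    have hcl : Set.EqOn h₁ (fun _ => 0) (closure (Set.Ioo 0 t)) :=
      Set.EqOn.closure (fun u hu => hIoo u hu) hh₁cont continuous_const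
    rw [closure_Ioo ht.ne] at hcl
    exact hcl hs
  constructor
  · -- the Euler–Lagrange ODE
    intro s hs
    have hIoo2 : Set.EqOn (deriv (deriv ytilde)) K (Set.Ioo 0 t) := by
      intro u hu
      have hev : deriv ytilde =ᶠ[nhds u] fun r => P r + c := by
        filter_upwards [Ioo_mem_nhds hu.1 hu.2] with r hr
        have hv := hvanish r ⟨hr.1.le, hr.2.le⟩
        rw [hh₁] at hv
        simp only at hv
        linarith
      rw [hev.deriv_eq]
      exact ((hPd u).add_const c).deriv
    have hcl := Set.EqOn.closure hIoo2 hy''cont hKcont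
    rw [closure_Ioo ht.ne] at hcl
    rw [← hKeq s hs]
    exact hcl hs
  · -- the natural boundary condition
    have hv := hvanish 0 ⟨le_rfl, ht.le⟩
    rw [hh₁] at hv
    simp only at hv
    rw [hP0] at hv
    linarith
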